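/- Let M be a 2×2 real matrix with non-real complex conjugate eigenvalues λ = λ_R − iλ_I and λ̄ (λ_I ≠ 0). Then the 4-dimensional Lie algebra G_M = ℝ[M] ⋉ ℝ² is isomorphic to aff(ℂ) regarded as a real Lie algebra, i.e., the Lie algebra with basis (X₁,X₂,X₃,X₄) and nonzero brackets [X₁,X₃]=X₃, [X₁,X₄]=X₄, [X₂,X₃]=X₄, [X₂,X₄]=−X₃. -/

import Mathlib

set_option maxHeartbeats 1000000

open Matrix Polynomial

/-- Bracket of `B ⋉ ℝ²` for a subspace `B` of 2×2 matrices. -/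
def bra2 (B : Submodule ℝ (Matrix (Fin 2) (Fin 2) ℝ)) :
    (B × (Fin 2 → ℝ)) → (B × (Fin 2 → ℝ)) → (B × (Fin 2 → ℝ)) :=
  fun p q =>
    (0, Matrix.mulVec (p.1 : Matrix (Fin 2) (Fin 2) ℝ) q.2
        - Matrix.mulVec (q.1 : Matrix (Fin 2) (Fin 2) ℝ) p.2)

/-- for a 2×2 real matrix with non-real conjugate eigenvalues
λ_R ± iλ_I (λ_I ≠ 0), the Lie algebra G_M = ℝ[M] ⋉ ℝ² is isomorphic to aff(ℂ):
it admits a basis X₁,…,X₄ with the aff(ℂ) bracket relations. -/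
theorem stmt14 (M : Matrix (Fin 2) (Fin 2) ℝ) (lamR lamI : ℝ) (hI : lamI ≠ 0)
    (hchar : M.charpoly = (X - C lamR) ^ 2 + C (lamI ^ 2)) :
    ∃ b : Module.Basis (Fin 4) ℝ
      (((Algebra.adjoin ℝ ({M} : Set (Matrix (Fin 2) (Fin 2) ℝ))).toSubmodule)
        × (Fin 2 → ℝ)),
      bra2 _ (b 0) (b 1) = 0 ∧
      bra2 _ (b 2) (b 3) = 0 ∧
      bra2 _ (b 0) (b 2) = b 2 ∧
      bra2 _ (b 0) (b 3) = b 3 ∧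
      bra2 _ (b 1) (b 2) = b 3 ∧
      bra2 _ (b 1) (b 3) = -(b 2) := by
  set A : Matrix (Fin 2) (Fin 2) ℝ := lamI⁻¹ • (M - lamR • 1) with hAdef
  -- Cayley–Hamilton
  have hsq : (M - lamR • 1) * (M - lamR • 1) = -(lamI ^ 2) • 1 := by
    have h := Matrix.aeval_self_charpoly M
    rw [hchar] at h
    simp only [map_add, map_pow, _root_.map_mul, map_sub, aeval_X, aeval_C,
      Algebra.algebraMap_eq_smul_one, sq, smul_mul_smul_comm, mul_one] at h
    linear_combination (norm := module) h
  have hA2 : A * A = -1 := by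
    rw [hAdef, smul_mul_smul_comm, hsq, smul_smul]
    rw [show lamI⁻¹ * lamI⁻¹ * -lamI ^ 2 = -1 by field_simp]
    simp
  -- memberships
  set B := (Algebra.adjoin ℝ ({M} : Set (Matrix (Fin 2) (Fin 2) ℝ))).toSubmodule with hBdef
  have h1mem : (1 : Matrix (Fin 2) (Fin 2) ℝ) ∈ B := Subalgebra.one_mem _
  have hMmem : M ∈ B := Algebra.self_mem_adjoin_singleton ℝ M
  have hAmem : A ∈ B :=
    Submodule.smul_mem _ _ (Submodule.sub_mem _ hMmem (Submodule.smul_mem _ _ h1mem))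
  -- every element of the adjoin is a combination of 1 and A
  have hspan : ∀ m ∈ B,
      ∃ c d : ℝ, m = c • (1 : Matrix (Fin 2) (Fin 2) ℝ) + d • A := by
    intro m hm
    rw [hBdef, Subalgebra.mem_toSubmodule, Algebra.adjoin_singleton_eq_range_aeval] at hm
    obtain ⟨p, hp⟩ := hm
    have hmonic := M.charpoly_monic
    have hdeg : (p %ₘ M.charpoly).degree ≤ 1 := by
      have := Polynomial.degree_modByMonic_lt p hmonic
      rw [M.charpoly_degree_eq_dim] at this
      simp only [Fintype.card_fin] at this
      exact Order.le_of_lt_succ (by exact_mod_cast this)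
    have hself : aeval M (p %ₘ M.charpoly) = m := by
      rw [Polynomial.aeval_modByMonic_eq_self_of_root (Matrix.aeval_self_charpoly M)]
      exact hp
    rw [Polynomial.eq_X_add_C_of_degree_le_one hdeg] at hself
    simp only [map_add, _root_.map_mul, aeval_X, aeval_C,
      Algebra.algebraMap_eq_smul_one, smul_mul_assoc, one_mul] at hself
    refine ⟨(p %ₘ M.charpoly).coeff 0 + (p %ₘ M.charpoly).coeff 1 * lamR,
      (p %ₘ M.charpoly).coeff 1 * lamI, ?_⟩
    rw [← hself, hAdef]
    rw [smul_smul, show (p %ₘ M.charpoly).coeff 1 * lamI * lamI⁻¹ = (p %ₘ M.charpoly).coeff 1 by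
      field_simp]
    module
  -- basis of the adjoin
  have hliB : LinearIndependent ℝ ![(⟨1, h1mem⟩ : B), ⟨A, hAmem⟩] := by
    rw [LinearIndependent.pair_iff]
    intro s t hst
    have h0 : s • (1 : Matrix (Fin 2) (Fin 2) ℝ) + t • A = 0 := congrArg Subtype.val hst
    have h1 : s • A - t • (1 : Matrix (Fin 2) (Fin 2) ℝ) = 0 := by
      have h' := congrArg (fun Y => Y * A) h0
      simp only [add_mul, smul_mul_assoc, one_mul, hA2, zero_mul, mul_neg_one, smul_neg] at h'
      linear_combination (norm := module) h'
    have h2 : (s ^ 2 + t ^ 2) • (1 : Matrix (Fin 2) (Fin 2) ℝ) = 0 := by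
      linear_combination (norm := module) s • h0 - t • h1
    have h3 := congrFun (congrFun h2 0) 0
    simp [Matrix.one_apply] at h3
    constructor <;> nlinarith [sq_nonneg s, sq_nonneg t]
  have hspanB : ⊤ ≤ Submodule.span ℝ (Set.range ![(⟨1, h1mem⟩ : B), ⟨A, hAmem⟩]) := by
    rintro ⟨m, hm⟩ _
    obtain ⟨c, d, rfl⟩ := hspan m hm
    have heq : (⟨c • 1 + d • A, hm⟩ : B)
        = c • (⟨1, h1mem⟩ : B) + d • (⟨A, hAmem⟩ : B) := by
      apply Subtype.ext; rfl
    rw [heq]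
    exact Submodule.add_mem _
      (Submodule.smul_mem _ _ (Submodule.subset_span ⟨0, rfl⟩))
      (Submodule.smul_mem _ _ (Submodule.subset_span ⟨1, rfl⟩))
  -- basis of ℝ²
  set e0 : Fin 2 → ℝ := ![1, 0] with he0
  set w : Fin 2 → ℝ := A.mulVec e0 with hw
  have hAw : A.mulVec w = -e0 := by
    rw [hw, Matrix.mulVec_mulVec, hA2, Matrix.neg_mulVec, Matrix.one_mulVec]
  have hliV : LinearIndependent ℝ ![e0, w] := by
    rw [LinearIndependent.pair_iff]
    intro s t hst
    have h1 : s • w - t • e0 = 0 := by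
      have h' := congrArg A.mulVec hst
      simp only [Matrix.mulVec_add, Matrix.mulVec_smul, hAw, Matrix.mulVec_zero, ← hw,
        smul_neg] at h'
      linear_combination (norm := module) h'
    have h2 : (s ^ 2 + t ^ 2) • e0 = 0 := by
      linear_combination (norm := module) s • hst - t • h1
    have h3 := congrFun h2 0
    simp [he0] at h3
    constructor <;> nlinarith [sq_nonneg s, sq_nonneg t]
  have hcard : Fintype.card (Fin 2) = Module.finrank ℝ (Fin 2 → ℝ) := by simp
  refine ⟨(((Module.Basis.mk hliB hspanB).prod
      (basisOfLinearIndependentOfCardEqFinrank hliV hcard)).reindex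
      (finSumFinEquiv : Fin 2 ⊕ Fin 2 ≃ Fin 4)), ?_, ?_, ?_, ?_, ?_, ?_⟩ <;>
  · simp only [Module.Basis.reindex_apply,
      show (finSumFinEquiv : Fin 2 ⊕ Fin 2 ≃ Fin 4).symm 0 = Sum.inl 0 from rfl,
      show (finSumFinEquiv : Fin 2 ⊕ Fin 2 ≃ Fin 4).symm 1 = Sum.inl 1 from rfl,
      show (finSumFinEquiv : Fin 2 ⊕ Fin 2 ≃ Fin 4).symm 2 = Sum.inr 0 from rfl,
      show (finSumFinEquiv : Fin 2 ⊕ Fin 2 ≃ Fin 4).symm 3 = Sum.inr 1 from rfl,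
      Module.Basis.prod_apply, Sum.elim_inl, Sum.elim_inr, Function.comp_apply,
      LinearMap.inl_apply, LinearMap.inr_apply, Module.Basis.mk_apply,
      coe_basisOfLinearIndependentOfCardEqFinrank,
      Matrix.cons_val_zero, Matrix.cons_val_one, Matrix.head_cons]
    simp [bra2, Prod.ext_iff, hAw, ← hw]
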